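/- For every linear map U on ℂ^{F_d^n}, the second Pauli uniformity quantity equals the L⁴-norm of the Fourier transform: E_{h₁,h₂ ∈ F_d^{2n}} d^{−n} tr(∂_{h₂}∂_{h₁} U) = Σ_{a ∈ F_d^{2n}} |Û(a)|⁴. -/

import Mathlib

open Matrix Complex

namespace CH

variable (d n : ℕ) [NeZero d]

/-- Phase space `F_d^{2n}`, written as pairs `(u, v)` with `u, v ∈ F_d^n`. -/
abbrev PSpace := (Fin n → ZMod d) × (Fin n → ZMod d)

/-- Linear maps on `ℂ^{F_d^n}`, as matrices. -/
abbrev Mat := Matrix (Fin n → ZMod d) (Fin n → ZMod d) ℂ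

/-- `ω = e^{2πi/d}`. -/
noncomputable def omg : ℂ := Complex.exp (2 * Real.pi * Complex.I / d)

/-- `τ = (-1)^d e^{iπ/d}`. -/
noncomputable def tau : ℂ := (-1 : ℂ) ^ d * Complex.exp (Real.pi * Complex.I / d)

/-- `D = 2d` if `d = 2`, else `D = d`. -/
def Dd : ℕ := if d = 2 then 4 else d

/-- The translation operator `X^v`, with `X^v |u⟩ = |u + v⟩`. -/
noncomputable def Xop (v : Fin n → ZMod d) : Mat d n :=
  Matrix.of fun u u' => if u = u' + v then 1 else 0

/-- The phase operator `Z^v`, with `Z^v |u⟩ = ω^{u·v} |u⟩`. -/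
noncomputable def Zop (v : Fin n → ZMod d) : Mat d n :=
  Matrix.diagonal fun u => omg d ^ (∑ i, u i * v i : ZMod d).val

/-- The Weyl operator `W_{(u,v)} = τ^{-(|u₁v₁| + ⋯ + |uₙvₙ|)} Z^u X^v`. -/
noncomputable def Weyl (a : PSpace d n) : Mat d n :=
  tau d ^ (-(∑ i, ((a.1 i * a.2 i).val : ℤ))) • (Zop d n a.1 * Xop d n a.2)

/-- Normalized trace inner product `⟨A,B⟩ = d^{-n} tr(A* B)`. -/
noncomputable def trInner (A B : Mat d n) : ℂ := ((d : ℂ) ^ n)⁻¹ * (Aᴴ * B).trace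

/-- Normalized Frobenius norm `‖A‖₂ = ⟨A,A⟩^{1/2}`. -/
noncomputable def hsNorm (A : Mat d n) : ℝ := Real.sqrt (trInner d n A A).re

/-- Pauli derivative `∂_h U = W_h U W_h* U*`. -/
noncomputable def pderiv (h : PSpace d n) (U : Mat d n) : Mat d n :=
  Weyl d n h * U * (Weyl d n h)ᴴ * Uᴴ

/-- The quantity `‖U‖_{P^k}^{2^k} = E_{h₁,…,h_k} d^{-n} tr(∂_{h_k} ⋯ ∂_{h₁} U)`. -/
noncomputable def pq : ℕ → Mat d n → ℂ
  | 0, U => ((d : ℂ) ^ n)⁻¹ * U.trace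
  | (k+1), U => ((d : ℂ) ^ (2*n))⁻¹ * ∑ h : PSpace d n, pq k (pderiv d n h U)

/-- The `k`-th Pauli uniformity norm `‖U‖_{P^k}`, the `2^k`-th root of `pq k U`. -/
noncomputable def pnorm (k : ℕ) (U : Mat d n) : ℝ := (pq d n k U).re ^ (((2:ℝ) ^ k)⁻¹)

/-- The Pauli group `C^{(1)} = {τ^p W_h : p ∈ Z_D, h ∈ F_d^{2n}}`. -/
def pauliGroup : Set (Mat d n) :=
  {U | ∃ (p : ℕ) (h : PSpace d n), U = tau d ^ p • Weyl d n h}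

/-- The Clifford hierarchy. -/
def cliff : ℕ → Set (Mat d n)
  | 0 => {U | ∃ θ : ℝ, U = Complex.exp (θ * Complex.I) • (1 : Mat d n)}
  | 1 => pauliGroup d n
  | (k+2) => {U | U ∈ unitary (Mat d n) ∧
      ∀ P ∈ pauliGroup d n, U * P * Uᴴ ∈ cliff (k+1)}

/-- Pauli polynomials of degree at most `k`. -/
def ppoly : ℕ → Set (Mat d n)
  | 0 => {U | ∃ θ : ℝ, U = Complex.exp (θ * Complex.I) • (1 : Mat d n)}
  | (k+1) => {U | U ∈ unitary (Mat d n) ∧ ∀ h : PSpace d n, pderiv d n h U ∈ ppoly k}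

/-- Symplectic form `[(u,v),(u',v')] = u·v' - u'·v` on `F_d^{2n}`. -/
def symp (a b : PSpace d n) : ZMod d :=
  (∑ i, a.1 i * b.2 i) - (∑ i, b.1 i * a.2 i)

/-- Multiplication of the Heisenberg group. -/
def heisMul (β : PSpace d n → PSpace d n → ZMod (Dd d))
    (x y : ZMod (Dd d) × PSpace d n) : ZMod (Dd d) × PSpace d n :=
  (x.1 + y.1 + β x.2 y.2, x.2 + y.2)

noncomputable def ee (x : ZMod d) : ℂ := omg d ^ x.val

lemma omg_pow_d : omg d ^ d = 1 := by
  rw [omg, ← Complex.exp_nat_mul]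
  have hd : (d : ℂ) ≠ 0 := Nat.cast_ne_zero.2 (NeZero.ne d)
  have : (d : ℂ) * (2 * Real.pi * Complex.I / d) = 2 * Real.pi * Complex.I := by
    field_simp
  rw [this]
  simpa using Complex.exp_two_pi_mul_I

lemma omg_pow_mod (m : ℕ) : omg d ^ (m % d) = omg d ^ m := by
  conv_rhs => rw [← Nat.div_add_mod m d]
  rw [pow_add, pow_mul, omg_pow_d, one_pow, one_mul]

lemma ee_zero : ee d 0 = 1 := by simp [ee, ZMod.val_zero]

lemma ee_add (x y : ZMod d) : ee d (x + y) = ee d x * ee d y := by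
  rw [ee, ee, ee, ZMod.val_add, omg_pow_mod, pow_add]

lemma abs_omg : ‖omg d‖ = 1 := by
  have : (2 * Real.pi * Complex.I / d) = ((2 * Real.pi / d : ℝ) : ℂ) * Complex.I := by
    push_cast; ring
  rw [omg, this, Complex.norm_exp_ofReal_mul_I]

lemma ee_mul_ee_neg (x : ZMod d) : ee d x * ee d (-x) = 1 := by
  rw [← ee_add]; simp [ee_zero]

lemma conj_ee (x : ZMod d) : (starRingEnd ℂ) (ee d x) = ee d (-x) := by
  have h1 : ee d x * ee d (-x) = 1 := ee_mul_ee_neg d x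
  have h2 : ee d x * (starRingEnd ℂ) (ee d x) = 1 := by
    rw [Complex.mul_conj]
    norm_cast
    rw [Complex.normSq_eq_norm_sq]
    simp [ee, norm_pow, abs_omg]
  have hne : ee d x ≠ 0 := by
    intro h; rw [h, zero_mul] at h1; exact one_ne_zero h1.symm
  rw [← h1] at h2
  exact mul_left_cancel₀ hne h2

lemma omg_ne_one (hd : 2 ≤ d) : omg d ≠ 1 := by
  rw [omg]
  intro h
  rw [Complex.exp_eq_one_iff] at h
  obtain ⟨k, hk⟩ := h
  have hd0 : (d : ℂ) ≠ 0 := Nat.cast_ne_zero.2 (NeZero.ne d)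
  have hpi : (2 * (Real.pi:ℂ) * Complex.I) ≠ 0 := by
    simp [Real.pi_ne_zero, Complex.I_ne_zero]
  have h2 : (1 : ℂ) = k * d := by
    field_simp at hk
    have h3 : (2 * (Real.pi:ℂ) * Complex.I) * 1 = (2 * (Real.pi:ℂ) * Complex.I) * (k * d) := by
      linear_combination (2 * (Real.pi:ℂ) * Complex.I) * hk
    exact mul_left_cancel₀ hpi h3
  have h2' : (1 : ℝ) = k * d := by
    have := congrArg Complex.re h2
    simpa using this
  rcases le_or_gt k 0 with hk0 | hk0
  · have : (k:ℝ) * d ≤ 0 := by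
      apply mul_nonpos_of_nonpos_of_nonneg
      · exact_mod_cast hk0
      · positivity
    linarith
  · have hk1 : (1:ℝ) ≤ k := by exact_mod_cast hk0
    have : (2:ℝ) ≤ k * d := by
      have hd2 : (2:ℝ) ≤ d := by exact_mod_cast hd
      nlinarith
    linarith

lemma sum_ee_univ (hd : 2 ≤ d) : ∑ x : ZMod d, ee d x = 0 := by
  have h : ∑ x : ZMod d, ee d x = ∑ k ∈ Finset.range d, omg d ^ k := by
    apply Finset.sum_nbij' (fun (x : ZMod d) => x.val) (fun k => (k : ZMod d))
    · intro x _; exact Finset.mem_range.2 (ZMod.val_lt x)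
    · intro k _; exact Finset.mem_univ _
    · intro x _; simp [ZMod.natCast_val, ZMod.cast_id]
    · intro k hk; exact ZMod.val_natCast_of_lt (Finset.mem_range.1 hk)
    · intro x _; rfl
  rw [h, geom_sum_eq (omg_ne_one d hd), omg_pow_d]
  simp

lemma sum_ee_mul (hd : d.Prime) (c : ZMod d) :
    ∑ x : ZMod d, ee d (x * c) = if c = 0 then (d : ℂ) else 0 := by
  haveI := Fact.mk hd
  by_cases hc : c = 0
  · simp [hc, ee_zero, Finset.card_univ]
  · rw [if_neg hc]
    have h : ∑ x : ZMod d, ee d (x * c) = ∑ y : ZMod d, ee d y := by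
      apply Fintype.sum_equiv (Equiv.mulRight₀ c hc)
      intro x; rfl
    rw [h, sum_ee_univ d hd.two_le]

lemma ee_finsum {ι : Type*} (s : Finset ι) (g : ι → ZMod d) :
    ee d (∑ i ∈ s, g i) = ∏ i ∈ s, ee d (g i) := by
  classical
  induction s using Finset.cons_induction with
  | empty => simp [ee_zero]
  | cons a s ha ih => rw [Finset.sum_cons, Finset.prod_cons, ee_add, ih]

lemma sum_ee_fn (hd : d.Prime) (c : Fin n → ZMod d) :
    ∑ p : Fin n → ZMod d, ee d (∑ i, c i * p i)
      = if c = 0 then ((d : ℂ) ^ n) else 0 := by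
  have h : ∀ p : Fin n → ZMod d, ee d (∑ i, c i * p i) = ∏ i, ee d (c i * p i) := by
    intro p; rw [ee_finsum]
  simp only [h]
  rw [← Fintype.piFinset_univ,
    ← Finset.prod_univ_sum (fun _ => (Finset.univ : Finset (ZMod d)))
      (fun i x => ee d (c i * x))]
  have h2 : ∀ i : Fin n, ∑ x : ZMod d, ee d (c i * x) = if c i = 0 then (d:ℂ) else 0 := by
    intro i
    rw [← sum_ee_mul d hd (c i)]
    exact Finset.sum_congr rfl fun x _ => by rw [mul_comm]
  rw [Finset.prod_congr rfl fun i _ => h2 i]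
  by_cases hc : c = 0
  · simp [hc, Finset.prod_const, Finset.card_univ]
  · rw [if_neg hc]
    obtain ⟨i, hi⟩ := Function.ne_iff.1 hc
    exact Finset.prod_eq_zero (Finset.mem_univ i) (by simp only [Pi.zero_apply] at hi; simp [hi])


noncomputable def Gm (a : PSpace d n) : Mat d n := Zop d n a.1 * Xop d n a.2

lemma Gm_apply (a : PSpace d n) (r c : Fin n → ZMod d) :
    Gm d n a r c = if r = c + a.2 then ee d (∑ i, r i * a.1 i) else 0 := by
  simp [Gm, Zop, Xop, Matrix.diagonal_mul, ee, mul_ite, mul_one, mul_zero,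
    Matrix.mul_apply, Matrix.diagonal, Finset.sum_ite_eq, ite_mul, zero_mul]

lemma star_ee (x : ZMod d) : star (ee d x) = ee d (-x) := conj_ee d x

lemma Gm_mul (h : PSpace d n) (V : Mat d n) :
    Gm d n h * V = Matrix.of (fun r c => ee d (∑ i, r i * h.1 i) * V (r - h.2) c) := by
  ext r c
  rw [Matrix.mul_apply]
  rw [Finset.sum_eq_single (r - h.2)]
  · rw [Gm_apply, if_pos (by abel), Matrix.of_apply]
  · intro b _ hb
    rw [Gm_apply, if_neg, zero_mul]
    intro hh
    apply hb
    rw [hh]; abel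
  · intro hr; exact absurd (Finset.mem_univ _) hr

lemma mul_GmH (h : PSpace d n) (V : Mat d n) :
    V * (Gm d n h)ᴴ
      = Matrix.of (fun r c => ee d (-(∑ i, c i * h.1 i)) * V r (c - h.2)) := by
  ext r c
  rw [Matrix.mul_apply]
  rw [Finset.sum_eq_single (c - h.2)]
  · rw [Matrix.conjTranspose_apply, Gm_apply, if_pos (by abel), star_ee, Matrix.of_apply]
    ring
  · intro b _ hb
    rw [Matrix.conjTranspose_apply, Gm_apply, if_neg, star_zero, mul_zero]
    intro hh
    apply hb
    rw [hh]; abel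
  · intro hr; exact absurd (Finset.mem_univ _) hr

lemma conj_entry (V : Mat d n) (r s : Fin n → ZMod d) :
    Vᴴ s r = star (V r s) := Matrix.conjTranspose_apply V r s

lemma trace_conj_expand (M V : Mat d n) :
    (M * Vᴴ).trace = ∑ r, ∑ s, M r s * star (V r s) := by
  rw [Matrix.trace]
  simp only [Matrix.diag, Matrix.mul_apply, Matrix.conjTranspose_apply]

lemma sandwich_apply (h : PSpace d n) (V : Mat d n) (r s : Fin n → ZMod d) :
    (Gm d n h * V * (Gm d n h)ᴴ) r s
      = ee d (∑ i, r i * h.1 i) * ee d (-(∑ i, s i * h.1 i)) * V (r - h.2) (s - h.2) := by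
  rw [mul_GmH, Matrix.of_apply]
  rw [Gm_mul, Matrix.of_apply]
  ring


lemma star_exp_pi : star (Complex.exp (Real.pi * Complex.I / d))
    = Complex.exp (-(Real.pi * Complex.I / d)) := by
  rw [Complex.star_def, ← Complex.exp_conj]
  congr 1
  simp [map_div₀, Complex.conj_I]
  ring

lemma star_tau : star (tau d) = (-1 : ℂ) ^ d * Complex.exp (-(Real.pi * Complex.I / d)) := by
  rw [tau, star_mul', star_pow, star_neg, star_one, star_exp_pi]

lemma tau_mul_star : tau d * star (tau d) = 1 := by
  rw [star_tau, tau]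
  have h2 : ((-1:ℂ)^d) * ((-1:ℂ)^d) = 1 := by rw [← mul_pow]; norm_num
  have hE : Complex.exp (Real.pi * Complex.I / d) * Complex.exp (-(Real.pi * Complex.I / d)) = 1 := by
    rw [← Complex.exp_add]; simp
  calc (-1:ℂ)^d * Complex.exp (Real.pi * Complex.I / d)
        * ((-1:ℂ)^d * Complex.exp (-(Real.pi * Complex.I / d)))
      = ((-1:ℂ)^d * (-1:ℂ)^d)
        * (Complex.exp (Real.pi * Complex.I / d) * Complex.exp (-(Real.pi * Complex.I / d))) := by
        ring
    _ = 1 := by rw [h2, hE, one_mul]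

lemma tau_zpow_mul_star (z : ℤ) : tau d ^ z * star (tau d ^ z) = 1 := by
  have h : star (tau d ^ z) = (star (tau d)) ^ z := by
    simp only [Complex.star_def, map_zpow₀]
  rw [h, ← mul_zpow, tau_mul_star, _root_.one_zpow]

lemma pderiv_eq (h : PSpace d n) (U : Mat d n) :
    pderiv d n h U = Gm d n h * U * (Gm d n h)ᴴ * Uᴴ := by
  rw [pderiv, Weyl]
  set z : ℤ := -(∑ i, ((h.1 i * h.2 i).val : ℤ)) with hz
  set c : ℂ := tau d ^ z with hc
  have hT : (c • (Zop d n h.1 * Xop d n h.2))ᴴ = star c • (Gm d n h)ᴴ := by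
    rw [Matrix.conjTranspose_smul]; rfl
  rw [hT]
  rw [show c • (Zop d n h.1 * Xop d n h.2) = c • Gm d n h from rfl]
  have h1 : c * star c = 1 := tau_zpow_mul_star d z
  have h2 : star c * c = 1 := by rw [mul_comm]; exact h1
  have h3 : (starRingEnd ℂ) c * c = 1 := h2
  simp [Matrix.smul_mul, Matrix.mul_smul, smul_smul, h1, h2, h3]


lemma trace_pderiv (h : PSpace d n) (V : Mat d n) :
    (pderiv d n h V).trace
      = ∑ r, ∑ s, (ee d (∑ i, r i * h.1 i) * ee d (-(∑ i, s i * h.1 i)))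
          * (V (r - h.2) (s - h.2) * star (V r s)) := by
  rw [pderiv_eq, trace_conj_expand]
  refine Finset.sum_congr rfl fun r _ => Finset.sum_congr rfl fun s _ => ?_
  rw [sandwich_apply]
  ring

lemma ee_pair (p r s : Fin n → ZMod d) :
    ee d (∑ i, r i * p i) * ee d (-(∑ i, s i * p i))
      = ee d (∑ i, (r i - s i) * p i) := by
  rw [← ee_add]
  congr 1
  rw [Finset.sum_congr rfl fun i (_ : i ∈ Finset.univ) => sub_mul (r i) (s i) (p i),
    Finset.sum_sub_distrib, sub_eq_add_neg]

lemma sum_p (hd : d.Prime) (r s : Fin n → ZMod d) :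
    ∑ p : Fin n → ZMod d, ee d (∑ i, r i * p i) * ee d (-(∑ i, s i * p i))
      = if r = s then ((d:ℂ)^n) else 0 := by
  simp only [ee_pair]
  have := sum_ee_fn d n hd (r - s)
  simp only [Pi.sub_apply] at this
  rw [this]
  simp [sub_eq_zero]

lemma sum_shift (r : Fin n → ZMod d) (V : Mat d n) :
    ∑ q : Fin n → ZMod d, V (r - q) (r - q) = V.trace := by
  rw [Matrix.trace]
  exact Fintype.sum_equiv (Equiv.subLeft r) _ _ (fun q => rfl)

lemma sum_trace_pderiv (hd : d.Prime) (V : Mat d n) :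
    ∑ h : PSpace d n, (pderiv d n h V).trace
      = (d:ℂ)^n * (V.trace * star V.trace) := by
  rw [Fintype.sum_prod_type]
  simp only [trace_pderiv]
  rw [Finset.sum_comm]
  have step1 : ∀ q : Fin n → ZMod d,
      (∑ p : Fin n → ZMod d, ∑ r, ∑ s,
        (ee d (∑ i, r i * p i) * ee d (-(∑ i, s i * p i)))
          * (V (r - q) (s - q) * star (V r s)))
      = ∑ r, (d:ℂ)^n * (V (r - q) (r - q) * star (V r r)) := by
    intro q
    rw [Finset.sum_comm]
    refine Finset.sum_congr rfl fun r _ => ?_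
    rw [Finset.sum_comm]
    have h2 : ∀ s, (∑ p : Fin n → ZMod d,
        (ee d (∑ i, r i * p i) * ee d (-(∑ i, s i * p i)))
          * (V (r - q) (s - q) * star (V r s)))
        = (if r = s then ((d:ℂ)^n) else 0) * (V (r - q) (s - q) * star (V r s)) := by
      intro s
      rw [← Finset.sum_mul, sum_p d n hd r s]
    simp only [h2]
    simp [Finset.sum_ite_eq, ite_mul, zero_mul]
  simp only [step1]
  rw [Finset.sum_comm]
  have step2 : ∀ r : Fin n → ZMod d,
      (∑ q : Fin n → ZMod d, (d:ℂ)^n * (V (r - q) (r - q) * star (V r r)))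
      = (d:ℂ)^n * (V.trace * star (V r r)) := by
    intro r
    rw [← Finset.mul_sum, ← Finset.sum_mul, sum_shift]
  simp only [step2]
  rw [← Finset.mul_sum, ← Finset.mul_sum]
  congr 1
  congr 1
  rw [Matrix.trace, star_sum]
  rfl

lemma pq_one (hd : d.Prime) (V : Mat d n) :
    pq d n 1 V = (((d:ℂ)^n)⁻¹ * V.trace) * star (((d:ℂ)^n)⁻¹ * V.trace) := by
  show ((d:ℂ)^(2*n))⁻¹ * ∑ h : PSpace d n, pq d n 0 (pderiv d n h V) = _
  simp only [pq]
  rw [← Finset.mul_sum, sum_trace_pderiv d n hd V]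
  have hdn : ((d:ℂ)^n) ≠ 0 := pow_ne_zero _ (Nat.cast_ne_zero.2 (NeZero.ne d))
  have h2 : ((d:ℂ)^(2*n)) = (d:ℂ)^n * (d:ℂ)^n := by rw [two_mul, pow_add]
  rw [h2]
  have hs : star (((d:ℂ)^n)⁻¹ * V.trace) = ((d:ℂ)^n)⁻¹ * star V.trace := by
    rw [star_mul', star_inv₀]
    rw [show star ((d:ℂ)^n) = (d:ℂ)^n from by rw [star_pow, star_natCast]]
  rw [hs]
  field_simp


lemma FG_expand (a : PSpace d n) (U : Mat d n) :
    trInner d n (Gm d n a) U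
      = ((d:ℂ)^n)⁻¹ * ∑ c, ee d (-(∑ i, (c + a.2) i * a.1 i)) * U (c + a.2) c := by
  rw [trInner]
  congr 1
  rw [Matrix.trace]
  simp only [Matrix.diag, Matrix.mul_apply, Matrix.conjTranspose_apply]
  refine Finset.sum_congr rfl fun c _ => ?_
  rw [Finset.sum_eq_single (c + a.2)]
  · rw [Gm_apply, if_pos rfl, star_ee]
  · intro b _ hb
    rw [Gm_apply, if_neg hb, star_zero, zero_mul]
  · intro hr; exact absurd (Finset.mem_univ _) hr

lemma star_FG_expand (a : PSpace d n) (U : Mat d n) :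
    star (trInner d n (Gm d n a) U)
      = ((d:ℂ)^n)⁻¹ * ∑ c, ee d (∑ i, (c + a.2) i * a.1 i) * star (U (c + a.2) c) := by
  rw [FG_expand, star_mul', star_sum]
  have h1 : ∀ c : Fin n → ZMod d,
      star (ee d (-(∑ i, (c + a.2) i * a.1 i)) * U (c + a.2) c)
        = ee d (∑ i, (c + a.2) i * a.1 i) * star (U (c + a.2) c) := by
    intro c
    rw [star_mul', star_ee, neg_neg]
  simp only [h1]
  rw [show star (((d:ℂ)^n)⁻¹) = ((d:ℂ)^n)⁻¹ from by
    rw [star_inv₀, star_pow, star_natCast], mul_comm]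


lemma trace_pderiv_fourier (hd : d.Prime) (h : PSpace d n) (U : Mat d n) :
    ∑ a : PSpace d n,
        (trInner d n (Gm d n a) U * star (trInner d n (Gm d n a) U)) * ee d (symp d n h a)
      = ((d:ℂ)^n)⁻¹ * (pderiv d n h U).trace := by
  classical
  have hdn : ((d:ℂ)^n) ≠ 0 := pow_ne_zero _ (Nat.cast_ne_zero.2 (NeZero.ne d))
  -- expand each summand via the Fourier coefficient formulas
  have hF : ∀ a : PSpace d n,
      (trInner d n (Gm d n a) U * star (trInner d n (Gm d n a) U)) * ee d (symp d n h a)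
        = (((d:ℂ)^n)⁻¹ * ((d:ℂ)^n)⁻¹) * ∑ c : Fin n → ZMod d, ∑ c' : Fin n → ZMod d,
            (ee d (-(∑ i, (c + a.2) i * a.1 i)) * U (c + a.2) c)
              * ((ee d (∑ i, (c' + a.2) i * a.1 i) * star (U (c' + a.2) c'))
                * ee d (symp d n h a)) := by
    intro a
    rw [star_FG_expand, FG_expand]
    have hss :
        (∑ c : Fin n → ZMod d, ee d (-(∑ i, (c + a.2) i * a.1 i)) * U (c + a.2) c)
          * (∑ c' : Fin n → ZMod d, ee d (∑ i, (c' + a.2) i * a.1 i) * star (U (c' + a.2) c'))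
        = ∑ c : Fin n → ZMod d, ∑ c' : Fin n → ZMod d,
            (ee d (-(∑ i, (c + a.2) i * a.1 i)) * U (c + a.2) c)
              * (ee d (∑ i, (c' + a.2) i * a.1 i) * star (U (c' + a.2) c')) := by
      rw [Finset.sum_mul_sum]
    calc (((d:ℂ)^n)⁻¹ * ∑ c, ee d (-(∑ i, (c + a.2) i * a.1 i)) * U (c + a.2) c)
          * (((d:ℂ)^n)⁻¹ * ∑ c', ee d (∑ i, (c' + a.2) i * a.1 i) * star (U (c' + a.2) c'))
          * ee d (symp d n h a)
        = (((d:ℂ)^n)⁻¹ * ((d:ℂ)^n)⁻¹)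
            * (((∑ c : Fin n → ZMod d, ee d (-(∑ i, (c + a.2) i * a.1 i)) * U (c + a.2) c)
              * (∑ c' : Fin n → ZMod d, ee d (∑ i, (c' + a.2) i * a.1 i) * star (U (c' + a.2) c')))
                * ee d (symp d n h a)) := by ring
      _ = _ := by
        rw [hss, Finset.sum_mul]
        congr 1
        refine Finset.sum_congr rfl fun c _ => ?_
        rw [Finset.sum_mul]
        refine Finset.sum_congr rfl fun c' _ => ?_
        ring
  simp only [hF]
  rw [← Finset.mul_sum]
  rw [Fintype.sum_prod_type]
  -- collapse the α-sum
  have inner : ∀ (β c c' : Fin n → ZMod d),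
      (∑ α : Fin n → ZMod d,
        (ee d (-(∑ i, (c + β) i * α i)) * U (c + β) c)
          * ((ee d (∑ i, (c' + β) i * α i) * star (U (c' + β) c'))
            * ee d (symp d n h (α, β))))
      = (if c' = c + h.2 then ((d:ℂ)^n) else 0)
          * (ee d (∑ i, h.1 i * β i) * (U (c + β) c * star (U (c' + β) c'))) := by
    intro β c c'
    have hterm : ∀ α : Fin n → ZMod d,
        (ee d (-(∑ i, (c + β) i * α i)) * U (c + β) c)
          * ((ee d (∑ i, (c' + β) i * α i) * star (U (c' + β) c'))
            * ee d (symp d n h (α, β)))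
        = ee d (∑ i, (c' i - c i - h.2 i) * α i)
            * (ee d (∑ i, h.1 i * β i) * (U (c + β) c * star (U (c' + β) c'))) := by
      intro α
      have hsymp : symp d n h (α, β) = (∑ i, h.1 i * β i) + -(∑ i, α i * h.2 i) := by
        rw [symp, sub_eq_add_neg]
      rw [hsymp, ee_add]
      have hmerge : ee d (-(∑ i, (c + β) i * α i)) * ee d (∑ i, (c' + β) i * α i)
          * ee d (-(∑ i, α i * h.2 i)) = ee d (∑ i, (c' i - c i - h.2 i) * α i) := by
        rw [← ee_add, ← ee_add]
        congr 1
        have h4 : (∑ i, (c' i - c i - h.2 i) * α i)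
            = (∑ i, (c' + β) i * α i) - (∑ i, (c + β) i * α i) - (∑ i, α i * h.2 i) := by
          rw [← Finset.sum_sub_distrib, ← Finset.sum_sub_distrib]
          refine Finset.sum_congr rfl fun i _ => ?_
          simp only [Pi.add_apply]
          ring
        rw [h4]
        ring
      calc (ee d (-(∑ i, (c + β) i * α i)) * U (c + β) c)
            * ((ee d (∑ i, (c' + β) i * α i) * star (U (c' + β) c'))
              * (ee d (∑ i, h.1 i * β i) * ee d (-(∑ i, α i * h.2 i))))
          = (ee d (-(∑ i, (c + β) i * α i)) * ee d (∑ i, (c' + β) i * α i)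
              * ee d (-(∑ i, α i * h.2 i)))
            * (ee d (∑ i, h.1 i * β i) * (U (c + β) c * star (U (c' + β) c'))) := by ring
        _ = _ := by rw [hmerge]
    simp only [hterm]
    rw [← Finset.sum_mul]
    congr 1
    have hsum := sum_ee_fn d n hd (c' - c - h.2)
    simp only [Pi.sub_apply] at hsum
    rw [hsum, if_congr (by rw [sub_sub, sub_eq_zero]) rfl rfl]
  -- reorder sums so that α is innermost, then collapse
  rw [Finset.sum_comm]
  have swap : ∀ β : Fin n → ZMod d,
      (∑ α : Fin n → ZMod d, ∑ c : Fin n → ZMod d, ∑ c' : Fin n → ZMod d,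
        (ee d (-(∑ i, (c + β) i * α i)) * U (c + β) c)
          * ((ee d (∑ i, (c' + β) i * α i) * star (U (c' + β) c'))
            * ee d (symp d n h (α, β))))
      = ∑ c : Fin n → ZMod d, ∑ c' : Fin n → ZMod d, ∑ α : Fin n → ZMod d,
        (ee d (-(∑ i, (c + β) i * α i)) * U (c + β) c)
          * ((ee d (∑ i, (c' + β) i * α i) * star (U (c' + β) c'))
            * ee d (symp d n h (α, β))) := by
    intro β
    rw [Finset.sum_comm]
    exact Finset.sum_congr rfl fun c _ => Finset.sum_comm
  simp only [swap, inner]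
  -- collapse the c'-sum
  have coll : ∀ (β c : Fin n → ZMod d),
      (∑ c' : Fin n → ZMod d, (if c' = c + h.2 then ((d:ℂ)^n) else 0)
          * (ee d (∑ i, h.1 i * β i) * (U (c + β) c * star (U (c' + β) c'))))
      = (d:ℂ)^n * (ee d (∑ i, h.1 i * β i)
          * (U (c + β) c * star (U ((c + h.2) + β) (c + h.2)))) := by
    intro β c
    simp [ite_mul, zero_mul, Finset.sum_ite_eq']
  simp only [coll]
  -- compare with the trace formula via the change of variables (β, c) ↦ (c + h.2 + β, c + h.2)
  rw [trace_pderiv]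
  have hRHS : ∀ (r s : Fin n → ZMod d),
      (ee d (∑ i, r i * h.1 i) * ee d (-(∑ i, s i * h.1 i)))
        * (U (r - h.2) (s - h.2) * star (U r s))
      = ee d (∑ i, (r i - s i) * h.1 i) * (U (r - h.2) (s - h.2) * star (U r s)) := by
    intro r s
    rw [ee_pair]
  simp only [hRHS]
  have L :
      (∑ x : (Fin n → ZMod d) × (Fin n → ZMod d),
        (d:ℂ)^n * (ee d (∑ i, h.1 i * x.1 i)
          * (U (x.2 + x.1) x.2 * star (U ((x.2 + h.2) + x.1) (x.2 + h.2)))))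
      = ∑ β : Fin n → ZMod d, ∑ c : Fin n → ZMod d,
        (d:ℂ)^n * (ee d (∑ i, h.1 i * β i)
          * (U (c + β) c * star (U ((c + h.2) + β) (c + h.2)))) :=
    Fintype.sum_prod_type _
  have R :
      (∑ y : (Fin n → ZMod d) × (Fin n → ZMod d),
        ee d (∑ i, (y.1 i - y.2 i) * h.1 i)
          * (U (y.1 - h.2) (y.2 - h.2) * star (U y.1 y.2)))
      = ∑ r : Fin n → ZMod d, ∑ s : Fin n → ZMod d,
        ee d (∑ i, (r i - s i) * h.1 i) * (U (r - h.2) (s - h.2) * star (U r s)) :=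
    Fintype.sum_prod_type _
  rw [← L, ← R]
  let e : ((Fin n → ZMod d) × (Fin n → ZMod d)) ≃ ((Fin n → ZMod d) × (Fin n → ZMod d)) :=
    { toFun := fun x => (x.2 + h.2 + x.1, x.2 + h.2)
      invFun := fun y => (y.1 - y.2, y.2 - h.2)
      left_inv := fun ⟨x1, x2⟩ => by
        simp only [Prod.mk.injEq]
        constructor <;> abel
      right_inv := fun ⟨y1, y2⟩ => by
        simp only [Prod.mk.injEq]
        constructor <;> abel }
  have hbij :
      (∑ x : (Fin n → ZMod d) × (Fin n → ZMod d),
        (d:ℂ)^n * (ee d (∑ i, h.1 i * x.1 i)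
          * (U (x.2 + x.1) x.2 * star (U ((x.2 + h.2) + x.1) (x.2 + h.2)))))
      = ∑ y : (Fin n → ZMod d) × (Fin n → ZMod d),
        (d:ℂ)^n * (ee d (∑ i, (y.1 i - y.2 i) * h.1 i)
          * (U (y.1 - h.2) (y.2 - h.2) * star (U y.1 y.2))) := by
    refine Fintype.sum_equiv e _ _ ?_
    rintro ⟨β, c⟩
    show (d:ℂ)^n * (ee d (∑ i, h.1 i * β i)
          * (U (c + β) c * star (U ((c + h.2) + β) (c + h.2))))
        = (d:ℂ)^n * (ee d (∑ i, ((c + h.2 + β) i - (c + h.2) i) * h.1 i)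
          * (U ((c + h.2 + β) - h.2) ((c + h.2) - h.2) * star (U (c + h.2 + β) (c + h.2))))
    have e1 : (c + h.2 + β) - h.2 = c + β := by abel
    have e2 : (c + h.2) - h.2 = c := by abel
    have e3 : (∑ i, ((c + h.2 + β) i - (c + h.2) i) * h.1 i) = ∑ i, h.1 i * β i := by
      refine Finset.sum_congr rfl fun i _ => ?_
      simp only [Pi.add_apply]
      ring
    rw [e1, e2, e3]
  rw [hbij, ← Finset.mul_sum]
  have heq : ∀ S : ℂ, ((d:ℂ)^n)⁻¹ * ((d:ℂ)^n)⁻¹ * ((d:ℂ)^n * S) = ((d:ℂ)^n)⁻¹ * S := by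
    intro S
    field_simp
  exact heq _


lemma symp_orth (hd : d.Prime) (a b : PSpace d n) :
    ∑ h : PSpace d n, ee d (symp d n h a) * ee d (-(symp d n h b))
      = if a = b then ((d:ℂ)^(2*n)) else 0 := by
  rw [Fintype.sum_prod_type]
  have hterm : ∀ p q : Fin n → ZMod d,
      ee d (symp d n (p, q) a) * ee d (-(symp d n (p, q) b))
        = ee d (∑ i, (a.2 i - b.2 i) * p i) * ee d (∑ i, (b.1 i - a.1 i) * q i) := by
    intro p q
    rw [← ee_add, ← ee_add]
    congr 1
    show symp d n (p, q) a + -(symp d n (p, q) b) = _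
    rw [symp, symp]
    have h1 : (∑ i, (a.2 i - b.2 i) * p i) = (∑ i, p i * a.2 i) - ∑ i, p i * b.2 i := by
      rw [← Finset.sum_sub_distrib]
      exact Finset.sum_congr rfl fun i _ => by ring
    have h2 : (∑ i, (b.1 i - a.1 i) * q i) = (∑ i, b.1 i * q i) - ∑ i, a.1 i * q i := by
      rw [← Finset.sum_sub_distrib]
      exact Finset.sum_congr rfl fun i _ => by ring
    rw [h1, h2]
    ring
  simp only [hterm]
  rw [show (∑ p : Fin n → ZMod d, ∑ q : Fin n → ZMod d,
      ee d (∑ i, (a.2 i - b.2 i) * p i) * ee d (∑ i, (b.1 i - a.1 i) * q i))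
      = (∑ p : Fin n → ZMod d, ee d (∑ i, (a.2 i - b.2 i) * p i))
        * (∑ q : Fin n → ZMod d, ee d (∑ i, (b.1 i - a.1 i) * q i)) from
    (Finset.sum_mul_sum _ _ _ _).symm]
  have hA := sum_ee_fn d n hd (a.2 - b.2)
  simp only [Pi.sub_apply] at hA
  have hB := sum_ee_fn d n hd (b.1 - a.1)
  simp only [Pi.sub_apply] at hB
  rw [hA, hB]
  by_cases hab : a = b
  · subst hab
    simp [sub_self, two_mul, pow_add]
  · rw [if_neg hab]
    rcases eq_or_ne (a.2 - b.2) 0 with h2 | h2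
    · have h1 : b.1 - a.1 ≠ 0 := by
        intro h1z
        apply hab
        have e2 : a.2 = b.2 := sub_eq_zero.mp h2
        have e1 : a.1 = b.1 := (sub_eq_zero.mp h1z).symm
        exact Prod.ext e1 e2
      simp [h1]
    · simp [h2]

lemma sum_char_sq (hd : d.Prime) (c : PSpace d n → ℂ) :
    ∑ h : PSpace d n,
        (∑ a : PSpace d n, c a * ee d (symp d n h a))
          * star (∑ b : PSpace d n, c b * ee d (symp d n h b))
      = (d:ℂ)^(2*n) * ∑ a : PSpace d n, c a * star (c a) := by
  have hstar : ∀ h : PSpace d n,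
      star (∑ b : PSpace d n, c b * ee d (symp d n h b))
        = ∑ b : PSpace d n, star (c b) * ee d (-(symp d n h b)) := by
    intro h
    rw [star_sum]
    refine Finset.sum_congr rfl fun b _ => ?_
    rw [star_mul', star_ee]
  simp only [hstar]
  have hexp : ∀ h : PSpace d n,
      (∑ a : PSpace d n, c a * ee d (symp d n h a))
        * (∑ b : PSpace d n, star (c b) * ee d (-(symp d n h b)))
      = ∑ a : PSpace d n, ∑ b : PSpace d n,
          (c a * star (c b)) * (ee d (symp d n h a) * ee d (-(symp d n h b))) := by
    intro h
    rw [Finset.sum_mul_sum]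
    refine Finset.sum_congr rfl fun a _ => Finset.sum_congr rfl fun b _ => by ring
  simp only [hexp]
  rw [Finset.sum_comm]
  have hsw : ∀ a : PSpace d n,
      (∑ h : PSpace d n, ∑ b : PSpace d n,
        (c a * star (c b)) * (ee d (symp d n h a) * ee d (-(symp d n h b))))
      = ∑ b : PSpace d n, ∑ h : PSpace d n,
        (c a * star (c b)) * (ee d (symp d n h a) * ee d (-(symp d n h b))) := fun a =>
    Finset.sum_comm
  simp only [hsw]
  have hco : ∀ a b : PSpace d n,
      (∑ h : PSpace d n, (c a * star (c b)) * (ee d (symp d n h a) * ee d (-(symp d n h b))))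
        = (c a * star (c b)) * (if a = b then ((d:ℂ)^(2*n)) else 0) := by
    intro a b
    rw [← Finset.mul_sum, symp_orth d n hd]
  simp only [hco]
  rw [Finset.mul_sum]
  refine Finset.sum_congr rfl fun a _ => ?_
  simp [mul_ite, mul_zero, Finset.sum_ite_eq]
  ring

lemma abs_tau : ‖tau d‖ = 1 := by
  rw [tau, norm_mul, norm_pow]
  rw [show (Real.pi : ℂ) * Complex.I / d = ((Real.pi / d : ℝ) : ℂ) * Complex.I from by
    push_cast; ring]
  rw [Complex.norm_exp_ofReal_mul_I]
  simp

lemma trInner_weyl_abs (a : PSpace d n) (U : Mat d n) :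
    ‖trInner d n (Weyl d n a) U‖ = ‖trInner d n (Gm d n a) U‖ := by
  have hW : Weyl d n a = tau d ^ (-(∑ i, ((a.1 i * a.2 i).val : ℤ))) • Gm d n a := rfl
  rw [hW, trInner, trInner, Matrix.conjTranspose_smul, Matrix.smul_mul, Matrix.trace_smul,
    smul_eq_mul]
  rw [norm_mul, norm_mul, norm_mul]
  have h1 : ‖star (tau d ^ (-(∑ i, ((a.1 i * a.2 i).val : ℤ))))‖ = 1 := by
    rw [norm_star, norm_zpow, abs_tau, _root_.one_zpow]
  rw [h1]
  ring


theorem stmt12 (d n : ℕ) [NeZero d] (hd : d.Prime) (hn : 1 ≤ n) (U : Mat d n) :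
    pq d n 2 U
      = ∑ a : PSpace d n, ((‖trInner d n (Weyl d n a) U‖ ^ 4 : ℝ) : ℂ) := by
  have hstep0 : pq d n 2 U
      = ((d:ℂ)^(2*n))⁻¹ * ∑ h : PSpace d n, pq d n 1 (pderiv d n h U) := rfl
  rw [hstep0]
  have h1 : ∀ h : PSpace d n, pq d n 1 (pderiv d n h U)
      = (∑ a : PSpace d n,
          (trInner d n (Gm d n a) U * star (trInner d n (Gm d n a) U)) * ee d (symp d n h a))
        * star (∑ a : PSpace d n,
          (trInner d n (Gm d n a) U * star (trInner d n (Gm d n a) U)) * ee d (symp d n h a)) := by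
    intro h
    rw [pq_one d n hd, ← trace_pderiv_fourier d n hd]
  simp only [h1]
  rw [sum_char_sq d n hd (fun a => trInner d n (Gm d n a) U * star (trInner d n (Gm d n a) U))]
  rw [← mul_assoc, inv_mul_cancel₀ (pow_ne_zero _ (Nat.cast_ne_zero.2 (NeZero.ne d))), one_mul]
  refine Finset.sum_congr rfl fun a _ => ?_
  rw [trInner_weyl_abs]
  set F := trInner d n (Gm d n a) U with hF
  have hmc : F * star F = ((‖F‖ ^ 2 : ℝ) : ℂ) := by
    rw [Complex.star_def, Complex.mul_conj, Complex.normSq_eq_norm_sq]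
  rw [hmc, Complex.star_def, Complex.conj_ofReal, ← Complex.ofReal_mul]
  congr 1
  ring

end CH
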